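/- Let C be a comb domain as described. For every n ≥ 1 and every real r with x_{n−1} < r ≤ x_n, the hyperbolic distance in C between x_{n−1} and r satisfies d_C(x_{n−1}, r) ≤ 4 arcsinh(r). -/

import Mathlib

open Filter

noncomputable section

/-- `f` is a Riemann mapping from the unit disk onto `D`: a conformal
(holomorphic and injective) map of the unit disk onto `D`. -/
def IsRiemannMap (f : ℂ → ℂ) (D : Set ℂ) : Prop :=
  DifferentiableOn ℂ f (Metric.ball 0 1) ∧
    Set.InjOn f (Metric.ball 0 1) ∧ f '' Metric.ball 0 1 = D

/-- `f` belongs to the Hardy space `H^p` of the unit disk: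
`sup_{0<r<1} ∫_0^{2π} |f(r e^{iθ})|^p dθ < +∞`. -/
def MemHardy (f : ℂ → ℂ) (p : ℝ) : Prop :=
  ∃ M : ℝ, ∀ r : ℝ, 0 < r → r < 1 →
    (∫ θ in (0:ℝ)..(2 * Real.pi),
      ‖f (↑r * Complex.exp (↑θ * Complex.I))‖ ^ p) ≤ M

/-- The Hardy number of a domain `D`:
`h(D) = sup {p > 0 : f ∈ H^p(𝔻)}` where `f` is a Riemann mapping of `𝔻` onto `D`. -/
def hardyNumber (D : Set ℂ) : EReal :=
  sSup {q : EReal | ∃ p : ℝ, 0 < p ∧ q = (p : EReal) ∧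
    ∃ f : ℂ → ℂ, IsRiemannMap f D ∧ MemHardy f p}

/-- The comb domain `C = {z : Re z > -x₁} \ ⋃_{n ≥ 0} {xₙ + iy : |y| ≥ 1}`. -/
def comb (x : ℕ → ℝ) : Set ℂ :=
  {z : ℂ | -(x 1) < z.re} \ ⋃ n : ℕ, {z : ℂ | z.re = x n ∧ 1 ≤ |z.im|}

/-- The hyperbolic distance between two points of the unit disk. -/
def hypDistDisk (z w : ℂ) : ℝ :=
  Real.log ((1 + ‖(z - w) / (1 - z * (starRingEnd ℂ) w)‖) /
    (1 - ‖(z - w) / (1 - z * (starRingEnd ℂ) w)‖))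

namespace CombAux

open Metric Complex Set Filter Topology

noncomputable def pd (z w : ℂ) : ℝ := ‖(z - w) / (1 - z * (starRingEnd ℂ) w)‖


lemma normSq_key (z w : ℂ) :
    Complex.normSq (1 - z * (starRingEnd ℂ) w) - Complex.normSq (z - w)
      = (1 - Complex.normSq z) * (1 - Complex.normSq w) := by
  simp only [Complex.normSq_apply, Complex.sub_re, Complex.sub_im, Complex.mul_re,
    Complex.mul_im, Complex.one_re, Complex.one_im, Complex.conj_re, Complex.conj_im]
  ring

lemma abs_lt_one_of_mem {z : ℂ} (hz : z ∈ ball (0:ℂ) 1) : ‖z‖ < 1 := by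
  rw [mem_ball_zero_iff] at hz; exact hz

lemma denom_ne_zero {z w : ℂ} (hz : z ∈ ball (0:ℂ) 1) (hw : w ∈ ball (0:ℂ) 1) :
    1 - z * (starRingEnd ℂ) w ≠ 0 := by
  intro h
  have h1 : z * (starRingEnd ℂ) w = 1 := by linear_combination -h
  have h2 := congrArg (‖·‖) h1
  rw [norm_mul, Complex.norm_conj, norm_one] at h2
  have hz' := abs_lt_one_of_mem hz
  have hw' := abs_lt_one_of_mem hw
  nlinarith [norm_nonneg z, norm_nonneg w]

lemma pd_lt_one {z w : ℂ} (hz : z ∈ ball (0:ℂ) 1) (hw : w ∈ ball (0:ℂ) 1) :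
    pd z w < 1 := by
  have hd := denom_ne_zero hz hw
  have hz' := abs_lt_one_of_mem hz
  have hw' := abs_lt_one_of_mem hw
  have h1 : Complex.normSq z < 1 := by
    rw [← Complex.sq_norm]; nlinarith [norm_nonneg z]
  have h2 : Complex.normSq w < 1 := by
    rw [← Complex.sq_norm]; nlinarith [norm_nonneg w]
  have key := normSq_key z w
  have h3 : Complex.normSq (z - w) < Complex.normSq (1 - z * (starRingEnd ℂ) w) := by
    nlinarith
  have h4 : ‖z - w‖ < ‖1 - z * (starRingEnd ℂ) w‖ := by
    rw [← Complex.sq_norm, ← Complex.sq_norm] at h3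
    exact lt_of_pow_lt_pow_left₀ 2 (norm_nonneg _) h3
  rw [pd, norm_div, div_lt_one (norm_pos_iff.mpr hd)]
  exact h4

lemma pd_nonneg (z w : ℂ) : 0 ≤ pd z w := norm_nonneg _

lemma pd_self (z : ℂ) : pd z z = 0 := by simp [pd]

lemma pd_comm (z w : ℂ) : pd z w = pd w z := by
  rw [pd, pd, norm_div, norm_div]
  congr 1
  · exact norm_sub_rev z w
  · have h : (starRingEnd ℂ) (1 - z * (starRingEnd ℂ) w) = 1 - w * (starRingEnd ℂ) z := by
      rw [map_sub, map_one, map_mul, Complex.conj_conj]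
      ring
    rw [← h, Complex.norm_conj]

lemma mem_ball_of_abs_lt {z : ℂ} (h : ‖z‖ < 1) : z ∈ ball (0:ℂ) 1 := by
  rw [mem_ball_zero_iff]; exact h

/-- Schwarz-Pick lemma. -/
lemma schwarz_pick {h : ℂ → ℂ} (hd : DifferentiableOn ℂ h (ball 0 1))
    (hm : MapsTo h (ball 0 1) (ball 0 1)) {z : ℂ} (hz : z ∈ ball (0:ℂ) 1) :
    pd (h z) (h 0) ≤ ‖z‖ := by
  have h0 : (0:ℂ) ∈ ball (0:ℂ) 1 := by simp
  set c : ℂ := h 0 with hc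
  have hcball : c ∈ ball (0:ℂ) 1 := hm h0
  set g : ℂ → ℂ := fun w => (h w - c) / (1 - (starRingEnd ℂ) c * h w) with hg
  have habs : ∀ w ∈ ball (0:ℂ) 1, ‖g w‖ = pd (h w) c := by
    intro w hw
    rw [hg]; simp only []
    rw [pd, mul_comm]
  have hgd : DifferentiableOn ℂ g (ball 0 1) := by
    apply DifferentiableOn.div (hd.sub (differentiableOn_const c))
      ((differentiableOn_const 1).sub ((differentiableOn_const _).mul hd))
    intro w hw
    have hne := denom_ne_zero (hm hw) hcball
    intro hzero
    apply hne
    have e : 1 - (starRingEnd ℂ) c * h w = 1 - h w * (starRingEnd ℂ) c := by ring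
    simp only [Pi.sub_apply, Pi.mul_apply] at hzero
    rw [e] at hzero; exact hzero
  have hgm : MapsTo g (ball 0 1) (ball 0 1) := by
    intro w hw
    apply mem_ball_of_abs_lt
    rw [habs w hw]
    exact pd_lt_one (hm hw) hcball
  have hg0 : g 0 = 0 := by
    rw [hg]; simp only []
    rw [← hc, sub_self, zero_div]
  have hfin := Complex.norm_le_norm_of_mapsTo_ball hgd (hgm.mono_right ball_subset_closedBall) hg0
    (z := z) (by rw [← mem_ball_zero_iff]; exact hz)
  rwa [habs z hz] at hfin




lemma pd_eq (z w : ℂ) : pd z w = ‖z - w‖ / ‖1 - z * (starRingEnd ℂ) w‖ :=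
  norm_div _ _

lemma denom_ne_zero' {z w : ℂ} (hz : z ∈ ball (0:ℂ) 1) (hw : w ∈ ball (0:ℂ) 1) :
    1 - (starRingEnd ℂ) w * z ≠ 0 := by
  have := denom_ne_zero hz hw; rwa [mul_comm] at this

lemma abs_mobius {a c : ℂ} :
    ‖(a - c) / (1 - (starRingEnd ℂ) c * a)‖ = pd a c := by
  rw [pd, mul_comm]

lemma mobius_mem {a c : ℂ} (ha : a ∈ ball (0:ℂ) 1) (hc : c ∈ ball (0:ℂ) 1) :
    (a - c) / (1 - (starRingEnd ℂ) c * a) ∈ ball (0:ℂ) 1 :=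
  mem_ball_of_abs_lt (by rw [abs_mobius]; exact pd_lt_one ha hc)

lemma pd_mobius {a b c : ℂ} (ha : a ∈ ball (0:ℂ) 1) (hb : b ∈ ball (0:ℂ) 1)
    (hc : c ∈ ball (0:ℂ) 1) :
    pd ((a - c) / (1 - (starRingEnd ℂ) c * a)) ((b - c) / (1 - (starRingEnd ℂ) c * b)) = pd a b := by
  set q := starRingEnd ℂ with hq
  set Ma := (a - c) / (1 - q c * a) with hMa
  set Mb := (b - c) / (1 - q c * b) with hMb
  have hMab : Ma ∈ ball (0:ℂ) 1 := mobius_mem ha hc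
  have hMbb : Mb ∈ ball (0:ℂ) 1 := mobius_mem hb hc
  have hD1 : 1 - q c * a ≠ 0 := denom_ne_zero' ha hc
  have hD2 : 1 - q c * b ≠ 0 := denom_ne_zero' hb hc
  have hD2' : 1 - c * q b ≠ 0 := by
    intro h; apply hD2
    have := congrArg q h
    simpa [map_sub, map_mul, hq, mul_comm] using this
  have hD3 : 1 - a * q b ≠ 0 := denom_ne_zero ha hb
  have hD4 : 1 - Ma * q Mb ≠ 0 := denom_ne_zero hMab hMbb
  have hqMb : q Mb = (q b - q c) / (1 - c * q b) := by
    rw [hMb, map_div₀, map_sub, map_sub, map_mul, map_one]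
    simp [hq, Complex.conj_conj]
  have key : (Ma - Mb) * (1 - a * q b) * (1 - q c * b)
      = (1 - Ma * q Mb) * (a - b) * (1 - c * q b) := by
    rw [hqMb, hMa, hMb]
    have hD1'' : 1 - a * q c ≠ 0 := by rwa [mul_comm]
    field_simp
    ring
  have habs := congrArg (‖·‖) key
  rw [norm_mul, norm_mul, norm_mul, norm_mul] at habs
  have hcb : ‖1 - c * q b‖ = ‖1 - q c * b‖ := by
    rw [← Complex.norm_conj (1 - c * q b)]
    simp [map_sub, map_mul, hq, Complex.conj_conj]
  rw [hcb] at habs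
  have hb2 : ‖1 - q c * b‖ ≠ 0 := norm_ne_zero_iff.mpr hD2
  have habs2 : ‖Ma - Mb‖ * ‖1 - a * q b‖
      = ‖1 - Ma * q Mb‖ * ‖a - b‖ :=
    mul_right_cancel₀ hb2 habs
  rw [pd_eq, pd_eq]
  rw [div_eq_div_iff (norm_ne_zero_iff.mpr hD4) (norm_ne_zero_iff.mpr hD3)]
  linarith [habs2]

lemma pd_le_elementary {u v : ℂ} (hu : u ∈ ball (0:ℂ) 1) (hv : v ∈ ball (0:ℂ) 1) :
    pd u v ≤ (‖u‖ + ‖v‖) / (1 + ‖u‖ * ‖v‖) := by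
  have hP0 : (0:ℝ) ≤ ‖u‖ := norm_nonneg u
  have hQ0 : (0:ℝ) ≤ ‖v‖ := norm_nonneg v
  have hP1 := abs_lt_one_of_mem hu
  have hQ1 := abs_lt_one_of_mem hv
  have hs_le : |(u * (starRingEnd ℂ) v).re| ≤ ‖u‖ * ‖v‖ := by
    calc |(u * (starRingEnd ℂ) v).re| ≤ ‖u * (starRingEnd ℂ) v‖ :=
          Complex.abs_re_le_norm _
    _ = ‖u‖ * ‖v‖ := by rw [norm_mul, Complex.norm_conj]
  have h1 : ‖u - v‖ ^ 2
      = ‖u‖ ^ 2 + ‖v‖ ^ 2 - 2 * (u * (starRingEnd ℂ) v).re := by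
    rw [Complex.sq_norm, Complex.sq_norm, Complex.sq_norm]
    simp only [Complex.normSq_apply, Complex.sub_re, Complex.sub_im, Complex.mul_re,
      Complex.mul_im, Complex.conj_re, Complex.conj_im]
    ring
  have h2 : ‖1 - u * (starRingEnd ℂ) v‖ ^ 2
      = 1 + ‖u‖ ^ 2 * ‖v‖ ^ 2 - 2 * (u * (starRingEnd ℂ) v).re := by
    rw [Complex.sq_norm, Complex.sq_norm, Complex.sq_norm]
    simp only [Complex.normSq_apply, Complex.sub_re, Complex.sub_im, Complex.mul_re,
      Complex.mul_im, Complex.conj_re, Complex.conj_im, Complex.one_re, Complex.one_im]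
    ring
  have hD : 1 - u * (starRingEnd ℂ) v ≠ 0 := denom_ne_zero hu hv
  have hDpos : 0 < ‖1 - u * (starRingEnd ℂ) v‖ := norm_pos_iff.mpr hD
  rw [pd_eq, div_le_div_iff₀ hDpos (by positivity)]
  have hps : 0 ≤ ‖u‖ * ‖v‖ + (u * (starRingEnd ℂ) v).re := by
    have := (abs_le.mp hs_le).1; linarith
  have hA : ‖u‖ ^ 2 + ‖v‖ ^ 2
      ≤ 1 + ‖u‖ ^ 2 * ‖v‖ ^ 2 := by
    have e1 : (0:ℝ) ≤ 1 - ‖u‖ ^ 2 := by nlinarith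
    have e2 : (0:ℝ) ≤ 1 - ‖v‖ ^ 2 := by nlinarith
    nlinarith [mul_nonneg e1 e2]
  have hsq : (‖u - v‖ * (1 + ‖u‖ * ‖v‖)) ^ 2
      ≤ ((‖u‖ + ‖v‖) * ‖1 - u * (starRingEnd ℂ) v‖) ^ 2 := by
    rw [mul_pow, mul_pow, h1, h2]
    nlinarith [mul_nonneg hps (by linarith [hA] :
      (0:ℝ) ≤ 1 + ‖u‖ ^ 2 * ‖v‖ ^ 2
        - (‖u‖ ^ 2 + ‖v‖ ^ 2))]
  have hX0 : (0:ℝ) ≤ ‖u - v‖ * (1 + ‖u‖ * ‖v‖) := by positivity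
  have hY0 : (0:ℝ) ≤ (‖u‖ + ‖v‖) * ‖1 - u * (starRingEnd ℂ) v‖ := by
    positivity
  exact (pow_le_pow_iff_left₀ hX0 hY0 two_ne_zero).mp hsq

lemma pd_strong_triangle {a b c : ℂ} (ha : a ∈ ball (0:ℂ) 1) (hb : b ∈ ball (0:ℂ) 1)
    (hc : c ∈ ball (0:ℂ) 1) :
    pd a b ≤ (pd a c + pd c b) / (1 + pd a c * pd c b) := by
  have h1 := pd_mobius ha hb hc
  have h2 := pd_le_elementary (mobius_mem ha hc) (mobius_mem hb hc)
  rw [h1, abs_mobius, abs_mobius] at h2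
  rw [pd_comm b c] at h2
  exact h2





lemma hypDistDisk_eq (z w : ℂ) : hypDistDisk z w = Real.log ((1 + pd z w) / (1 - pd z w)) := rfl

lemma hypDistDisk_comm (z w : ℂ) : hypDistDisk z w = hypDistDisk w z := by
  rw [hypDistDisk_eq, hypDistDisk_eq, pd_comm]

lemma hypDistDisk_self (z : ℂ) : hypDistDisk z z = 0 := by
  rw [hypDistDisk_eq]
  have : pd z z = 0 := by simp [pd]
  rw [this]; norm_num

lemma log_ratio_mono {p q : ℝ} (hp : 0 ≤ p) (hpq : p ≤ q) (hq : q < 1) :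
    Real.log ((1 + p) / (1 - p)) ≤ Real.log ((1 + q) / (1 - q)) := by
  have h1 : (0:ℝ) < 1 - q := by linarith
  have h2 : (0:ℝ) < 1 - p := by linarith
  apply Real.log_le_log (by positivity)
  rw [div_le_div_iff₀ h2 h1]
  nlinarith

lemma log_ratio_nonneg {p : ℝ} (hp : 0 ≤ p) (hq : p < 1) :
    0 ≤ Real.log ((1 + p) / (1 - p)) := by
  apply Real.log_nonneg
  rw [le_div_iff₀ (by linarith)]
  linarith

lemma hypDistDisk_nonneg {z w : ℂ} (hz : z ∈ ball (0:ℂ) 1) (hw : w ∈ ball (0:ℂ) 1) :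
    0 ≤ hypDistDisk z w := by
  rw [hypDistDisk_eq]
  exact log_ratio_nonneg (pd_nonneg z w) (pd_lt_one hz hw)

lemma hypDistDisk_triangle {a b c : ℂ} (ha : a ∈ ball (0:ℂ) 1) (hb : b ∈ ball (0:ℂ) 1)
    (hc : c ∈ ball (0:ℂ) 1) :
    hypDistDisk a b ≤ hypDistDisk a c + hypDistDisk c b := by
  have hp := pd_nonneg a c
  have hq := pd_nonneg c b
  have hp1 := pd_lt_one ha hc
  have hq1 := pd_lt_one hc hb
  have hT1 : (pd a c + pd c b) / (1 + pd a c * pd c b) < 1 := by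
    rw [div_lt_one (by nlinarith)]
    nlinarith
  have hT0 : 0 ≤ (pd a c + pd c b) / (1 + pd a c * pd c b) := by positivity
  rw [hypDistDisk_eq, hypDistDisk_eq, hypDistDisk_eq]
  have d1 : (0:ℝ) < 1 - pd a c := by linarith
  have d2 : (0:ℝ) < 1 - pd c b := by linarith
  have d3 : (0:ℝ) < 1 + pd a c * pd c b := by nlinarith
  have dT : (0:ℝ) < 1 - (pd a c + pd c b) / (1 + pd a c * pd c b) := by linarith
  have key : (1 + (pd a c + pd c b) / (1 + pd a c * pd c b)) /
      (1 - (pd a c + pd c b) / (1 + pd a c * pd c b))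
      = ((1 + pd a c) / (1 - pd a c)) * ((1 + pd c b) / (1 - pd c b)) := by
    rw [div_mul_div_comm, div_eq_div_iff dT.ne' (by positivity)]
    field_simp
    ring
  calc Real.log ((1 + pd a b) / (1 - pd a b))
      ≤ Real.log ((1 + (pd a c + pd c b) / (1 + pd a c * pd c b)) /
          (1 - (pd a c + pd c b) / (1 + pd a c * pd c b))) :=
        log_ratio_mono (pd_nonneg a b) (pd_strong_triangle ha hb hc) hT1
    _ = Real.log (((1 + pd a c) / (1 - pd a c)) * ((1 + pd c b) / (1 - pd c b))) := by
        rw [key]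
    _ = Real.log ((1 + pd a c) / (1 - pd a c)) + Real.log ((1 + pd c b) / (1 - pd c b)) := by
        apply Real.log_mul
        · exact ne_of_gt (div_pos (by linarith) d1)
        · exact ne_of_gt (div_pos (by linarith) d2)


lemma sinh_step (v h : ℝ) (hv : 0 ≤ v) (hh : 0 ≤ h) :
    Real.sinh (v + h) - Real.sinh v ≤ (Real.exp h - 1) * Real.cosh v := by
  rw [Real.sinh_add]
  have h1 : Real.sinh v ≤ Real.cosh v := by
    have := Real.cosh_sub_sinh v
    nlinarith [Real.exp_pos (-v)]
  have h2 : 1 ≤ Real.cosh h := Real.one_le_cosh h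
  have h3 : 0 ≤ Real.sinh v := Real.sinh_nonneg_iff.mpr hv
  have h4 : Real.sinh h + Real.cosh h = Real.exp h := Real.sinh_add_cosh h
  nlinarith [Real.cosh_pos v]

lemma exp_sub_one_le {h : ℝ} (h0 : 0 ≤ h) (h1 : h < 1) : Real.exp h - 1 ≤ h / (1 - h) := by
  have ha := Real.add_one_le_exp (-h)
  rw [Real.exp_neg] at ha
  have hb : 0 < Real.exp h := Real.exp_pos h
  have hc : (1 - h) * Real.exp h ≤ 1 := by
    have : 1 - h ≤ (Real.exp h)⁻¹ := by linarith
    calc (1 - h) * Real.exp h ≤ (Real.exp h)⁻¹ * Real.exp h := by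
          apply mul_le_mul_of_nonneg_right this hb.le
    _ = 1 := inv_mul_cancel₀ hb.ne'
  rw [le_div_iff₀ (by linarith)]
  nlinarith

lemma log_step {u h : ℝ} (hu0 : 0 ≤ u) (hu : u ≤ h / (1 - h)) (hh0 : 0 < h) (hh : h ≤ 1/4) :
    Real.log ((1 + u) / (1 - u)) ≤ 2 * h / (1 - 2 * h) := by
  have h1 : h / (1 - h) ≤ 1/3 := by
    rw [div_le_div_iff₀ (by linarith) (by norm_num)]; linarith
  have hu1 : u ≤ 1/3 := le_trans hu h1
  have hu2 : (0:ℝ) < 1 - u := by linarith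
  have hlog : Real.log ((1 + u) / (1 - u)) ≤ (1 + u) / (1 - u) - 1 :=
    Real.log_le_sub_one_of_pos (by positivity)
  have he : (1 + u) / (1 - u) - 1 = 2 * u / (1 - u) := by field_simp; ring
  have hprod : u * (1 - h) ≤ h := by
    rw [← le_div_iff₀ (by linarith)]; exact hu
  have final : 2 * u / (1 - u) ≤ 2 * h / (1 - 2 * h) := by
    rw [div_le_div_iff₀ hu2 (by linarith)]
    nlinarith
  linarith [he ▸ hlog]

lemma sqrt_one_add_sinh_sq (v : ℝ) : Real.sqrt (1 + Real.sinh v ^ 2) = Real.cosh v := by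
  rw [← Real.cosh_sq']
  exact Real.sqrt_sq (Real.cosh_pos v).le



lemma slit_closed (x : ℕ → ℝ) (n : ℕ) : IsClosed {z : ℂ | z.re = x n ∧ 1 ≤ |z.im|} := by
  apply IsClosed.inter
  · exact isClosed_eq Complex.continuous_re continuous_const
  · exact isClosed_le continuous_const (continuous_abs.comp Complex.continuous_im)

lemma comb_isOpen (x : ℕ → ℝ) (hxlim : Tendsto x atTop atTop) : IsOpen (comb x) := by
  rw [comb, diff_eq]
  apply IsOpen.inter
  · exact isOpen_lt continuous_const Complex.continuous_re
  rw [isOpen_iff_mem_nhds]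
  intro z hz
  rw [mem_compl_iff, mem_iUnion] at hz
  push_neg at hz
  -- the set of indices with x m ≤ z.re + 1 is finite
  have hfin : {m : ℕ | x m ≤ z.re + 1}.Finite := by
    have h1 : ∀ᶠ m in atTop, z.re + 1 < x m := hxlim.eventually_gt_atTop _
    rw [← Nat.cofinite_eq_atTop, eventually_cofinite] at h1
    convert h1 using 1
    ext m; simp [not_lt]
  set S : Set ℂ := ⋃ m ∈ {m : ℕ | x m ≤ z.re + 1}, {w : ℂ | w.re = x m ∧ 1 ≤ |w.im|} with hS
  have hSclosed : IsClosed S := hfin.isClosed_biUnion (fun m _ => slit_closed x m)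
  have hzS : z ∉ S := by
    intro h
    rw [hS, mem_iUnion₂] at h
    obtain ⟨m, _, hm⟩ := h
    exact hz m hm
  have hnb : ball z 1 ∩ Sᶜ ∈ 𝓝 z :=
    inter_mem (ball_mem_nhds z one_pos) (hSclosed.isOpen_compl.mem_nhds hzS)
  apply mem_of_superset hnb
  intro w ⟨hw1, hw2⟩
  rw [mem_compl_iff, mem_iUnion]
  push_neg
  intro m hm
  apply hw2
  rw [hS, mem_iUnion₂]
  refine ⟨m, ?_, hm⟩
  have : |w.re - z.re| ≤ ‖w - z‖ := by
    have := Complex.abs_re_le_norm (w - z)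
    simpa using this
  have hwz : ‖w - z‖ < 1 := by
    rw [mem_ball, Complex.dist_eq] at hw1; exact hw1
  have h3 : |w.re - z.re| < 1 := lt_of_le_of_lt this hwz
  simp only [mem_setOf_eq]
  rw [← hm.1]
  linarith [(abs_lt.mp h3).2]



noncomputable def Finv (f : ℂ → ℂ) : ℂ → ℂ := Function.invFunOn f (ball 0 1)

variable {x : ℕ → ℝ} {f : ℂ → ℂ}

lemma Finv_mem (him : f '' ball 0 1 = comb x) {z : ℂ} (hz : z ∈ comb x) :
    Finv f z ∈ ball (0:ℂ) 1 := by
  apply Function.invFunOn_mem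
  have : z ∈ f '' ball 0 1 := him ▸ hz
  simpa [Set.mem_image] using this

lemma Finv_right (him : f '' ball 0 1 = comb x) {z : ℂ} (hz : z ∈ comb x) :
    f (Finv f z) = z := by
  apply Function.invFunOn_eq
  have : z ∈ f '' ball 0 1 := him ▸ hz
  simpa [Set.mem_image] using this

lemma Finv_left (hinj : InjOn f (ball 0 1)) {w : ℂ} (hw : w ∈ ball (0:ℂ) 1) :
    Finv f (f w) = w :=
  hinj.leftInvOn_invFunOn hw

lemma f_isOpenMap (hd : DifferentiableOn ℂ f (ball 0 1)) (hinj : InjOn f (ball 0 1)) :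
    ∀ s ⊆ ball (0:ℂ) 1, IsOpen s → IsOpen (f '' s) := by
  have han : AnalyticOnNhd ℂ f (ball 0 1) := hd.analyticOnNhd isOpen_ball
  rcases han.is_constant_or_isOpen (convex_ball (0:ℂ) 1).isPreconnected with h | h
  · exfalso
    obtain ⟨w, hw⟩ := h
    have h0 : (0:ℂ) ∈ ball (0:ℂ) 1 := by simp
    have h1 : (1/2:ℂ) ∈ ball (0:ℂ) 1 := by
      rw [mem_ball_zero_iff]; norm_num
    have := hinj h0 h1 (by rw [hw 0 h0, hw _ h1])
    norm_num at this
  · exact h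

lemma Finv_continuousAt (hd : DifferentiableOn ℂ f (ball 0 1)) (hinj : InjOn f (ball 0 1))
    (him : f '' ball 0 1 = comb x) {z : ℂ} (hz : z ∈ comb x) : ContinuousAt (Finv f) z := by
  rw [ContinuousAt, tendsto_def]
  intro V hV
  obtain ⟨U, hUV, hUopen, hmemU⟩ := _root_.mem_nhds_iff.mp hV
  have hU' : IsOpen (U ∩ ball (0:ℂ) 1) := hUopen.inter isOpen_ball
  have himg : IsOpen (f '' (U ∩ ball 0 1)) :=
    f_isOpenMap hd hinj (U ∩ ball 0 1) inter_subset_right hU'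
  have hzmem : z ∈ f '' (U ∩ ball 0 1) :=
    ⟨Finv f z, ⟨hmemU, Finv_mem him hz⟩, Finv_right him hz⟩
  apply mem_of_superset (himg.mem_nhds hzmem)
  rintro y ⟨w, ⟨hwU, hwb⟩, rfl⟩
  have : Finv f (f w) = w := Finv_left hinj hwb
  rw [mem_preimage, this]
  exact hUV hwU

lemma Finv_diffAt_of_deriv_ne (hd : DifferentiableOn ℂ f (ball 0 1)) (hinj : InjOn f (ball 0 1))
    (him : f '' ball 0 1 = comb x) (hopen : IsOpen (comb x)) {z : ℂ} (hz : z ∈ comb x)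
    (hne : deriv f (Finv f z) ≠ 0) : DifferentiableAt ℂ (Finv f) z := by
  have hfd : DifferentiableAt ℂ f (Finv f z) :=
    hd.differentiableAt (isOpen_ball.mem_nhds (Finv_mem him hz))
  have hder : HasDerivAt f (deriv f (Finv f z)) (Finv f z) := hfd.hasDerivAt
  have hev : ∀ᶠ y in 𝓝 z, f (Finv f y) = y :=
    eventually_of_mem (hopen.mem_nhds hz) (fun y hy => Finv_right him hy)
  exact (HasDerivAt.of_local_left_inverse (Finv_continuousAt hd hinj him hz)
    hder hne hev).differentiableAt

lemma deriv_eventually_ne (hd : DifferentiableOn ℂ f (ball 0 1)) (hinj : InjOn f (ball 0 1))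
    {c : ℂ} (hc : c ∈ ball (0:ℂ) 1) :
    ∀ᶠ w in 𝓝[≠] c, deriv f w ≠ 0 := by
  have han : AnalyticOnNhd ℂ f (ball 0 1) := hd.analyticOnNhd isOpen_ball
  have hda : AnalyticAt ℂ (deriv f) c := (han.deriv_of_isOpen isOpen_ball) c hc
  rcases hda.eventually_eq_zero_or_eventually_ne_zero with h | h
  · exfalso
    have hball : ∀ᶠ w in 𝓝 c, w ∈ ball (0:ℂ) 1 := isOpen_ball.mem_nhds hc
    obtain ⟨ε, hε, hprop⟩ := Metric.eventually_nhds_iff.mp (h.and hball)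
    set ε' := min ε 1 with hε'
    have hε'0 : 0 < ε' := lt_min hε one_pos
    have hεle : ε' ≤ ε := min_le_left _ _
    have hsub : ball c (ε'/2 + ε'/4) ⊆ ball (0:ℂ) 1 := by
      intro w hw
      rw [mem_ball] at hw
      exact (hprop (by linarith)).2
    have hmem2 : c + (ε'/2 : ℝ) ∈ ball c (ε'/2 + ε'/4) := by
      rw [mem_ball, dist_eq_norm]
      simp only [add_sub_cancel_left]
      rw [Complex.norm_real, Real.norm_eq_abs, abs_of_pos (by linarith)]
      linarith
    have hconst : f c = f (c + (ε'/2 : ℝ)) := by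
      have hconv : Convex ℝ (ball c (ε'/2 + ε'/4)) := convex_ball c _
      have hdiff : DifferentiableOn ℂ f (ball c (ε'/2 + ε'/4)) := hd.mono hsub
      have hzero : ∀ w ∈ ball c (ε'/2 + ε'/4), fderivWithin ℂ f (ball c (ε'/2 + ε'/4)) w = 0 := by
        intro w hw
        have hw' := hw
        rw [mem_ball] at hw'
        have hderiv0 : deriv f w = 0 := (hprop (by linarith)).1
        have hfd : DifferentiableAt ℂ f w := hd.differentiableAt (isOpen_ball.mem_nhds (hsub hw))
        have hD : HasDerivAt f 0 w := by
          have := hfd.hasDerivAt; rwa [hderiv0] at this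
        have hF : HasFDerivAt f (0 : ℂ →L[ℂ] ℂ) w := by
          have h2 := hD.hasFDerivAt
          rw [show ContinuousLinearMap.toSpanSingleton ℂ (0:ℂ) = (0 : ℂ →L[ℂ] ℂ) by
            ext u; simp] at h2
          exact h2
        rw [fderivWithin_of_isOpen isOpen_ball hw]
        exact hF.fderiv
      exact hconv.is_const_of_fderivWithin_eq_zero hdiff hzero
        (mem_ball_self (by linarith)) hmem2
    have h1 : c ∈ ball (0:ℂ) 1 := hsub (mem_ball_self (by linarith))
    have h2 : c + (ε'/2 : ℝ) ∈ ball (0:ℂ) 1 := hsub hmem2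
    have heq := hinj h1 h2 hconst
    have : ((ε'/2 : ℝ) : ℂ) = 0 := by linear_combination -heq
    rw [Complex.ofReal_eq_zero] at this
    linarith
  · exact h

lemma Finv_diffAt (hd : DifferentiableOn ℂ f (ball 0 1)) (hinj : InjOn f (ball 0 1))
    (him : f '' ball 0 1 = comb x) (hopen : IsOpen (comb x)) {z : ℂ} (hz : z ∈ comb x) :
    DifferentiableAt ℂ (Finv f) z := by
  by_cases hne : deriv f (Finv f z) ≠ 0
  · exact Finv_diffAt_of_deriv_ne hd hinj him hopen hz hne
  push_neg at hne
  set c := Finv f z with hc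
  have h1 : ∀ᶠ w in 𝓝[≠] c, deriv f w ≠ 0 := deriv_eventually_ne hd hinj (Finv_mem him hz)
  rw [eventually_nhdsWithin_iff] at h1
  obtain ⟨U, hUsub, hUopen, hcU⟩ := _root_.mem_nhds_iff.mp h1
  set s := comb x ∩ Finv f ⁻¹' U with hs
  have hsnb : s ∈ 𝓝 z := by
    apply inter_mem (hopen.mem_nhds hz)
    exact (Finv_continuousAt hd hinj him hz) (hUopen.mem_nhds hcU)
  have hdiff : DifferentiableOn ℂ (Finv f) (s \ {z}) := by
    rintro y ⟨⟨hyc, hyU⟩, hyz⟩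
    have hyz' : y ≠ z := by simpa using hyz
    have hFy : Finv f y ≠ c := by
      intro h
      apply hyz'
      have := congrArg f h
      rwa [Finv_right him hyc, hc, Finv_right him hz] at this
    have hder : deriv f (Finv f y) ≠ 0 := by
      have h3 := hUsub hyU
      simp only [mem_setOf_eq] at h3
      exact h3 (by simpa using hFy)
    exact (Finv_diffAt_of_deriv_ne hd hinj him hopen hyc hder).differentiableWithinAt
  have hcont : ContinuousAt (Finv f) z := Finv_continuousAt hd hinj him hz
  have hall := (Complex.differentiableOn_compl_singleton_and_continuousAt_iff hsnb).mp
    ⟨hdiff, hcont⟩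
  exact hall.differentiableAt hsnb



lemma ball_subset_comb {x : ℕ → ℝ} (hx0 : x 0 = 0) (hmono : StrictMono x)
    (hsep : ∃ l : ℝ, 1 < l ∧ ∀ n : ℕ, l ≤ x (n + 1) - x n)
    (n : ℕ) (t d : ℝ) (ht1 : x n ≤ t) (ht2 : t ≤ x (n+1))
    (hd0 : 0 ≤ d) (hd1 : d ≤ t - x n) (hd2 : d ≤ x (n+1) - t) :
    ∀ z : ℂ, ‖z - (t:ℂ)‖ < Real.sqrt (1 + d^2) → z ∈ comb x := by
  obtain ⟨l, hl1, hl⟩ := hsep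
  have hx1 : 1 < x 1 := by have := hl 0; rw [hx0] at this; linarith
  have hxn0 : 0 ≤ x n := by
    rw [← hx0]; exact (hmono.le_iff_le).mpr (Nat.zero_le n)
  intro z hz
  have hsqrt_le : Real.sqrt (1 + d^2) ≤ 1 + d := by
    rw [show (1:ℝ) + d = Real.sqrt ((1+d)^2) by rw [Real.sqrt_sq (by linarith)]]
    apply Real.sqrt_le_sqrt
    nlinarith
  have hre : |z.re - t| ≤ ‖z - (t:ℂ)‖ := by
    have := Complex.abs_re_le_norm (z - (t:ℂ))
    simpa using this
  constructor
  · -- real part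
    simp only [mem_setOf_eq]
    have h1 : z.re - t > -(1 + d) := by
      have h0 : |z.re - t| < 1 + d := lt_of_le_of_lt hre (lt_of_lt_of_le hz hsqrt_le)
      linarith [(abs_lt.mp h0).1]
    have : z.re > t - 1 - d := by linarith
    have h2 : t - d ≥ x n := by linarith
    have : z.re > x n - 1 := by linarith
    nlinarith
  · -- not in any slit
    intro hmem
    rw [mem_iUnion] at hmem
    obtain ⟨m, hre_m, him_m⟩ := hmem
    have habs2 : ‖z - (t:ℂ)‖^2 = (z.re - t)^2 + z.im^2 := by
      rw [Complex.sq_norm, Complex.normSq_apply]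
      simp only [Complex.sub_re, Complex.sub_im, Complex.ofReal_re, Complex.ofReal_im]
      ring
    have hxm : |x m - t| ≥ d := by
      rcases le_or_gt m n with hmn | hmn
      · have : x m ≤ x n := hmono.le_iff_le.mpr hmn
        rw [_root_.abs_sub_comm, _root_.abs_of_nonneg (by linarith)]
        linarith
      · have : x (n+1) ≤ x m := hmono.le_iff_le.mpr hmn
        rw [_root_.abs_of_nonneg (by linarith)]
        linarith
    have h1 : (z.re - t)^2 ≥ d^2 := by
      rw [← hre_m] at hxm
      have := _root_.sq_abs (z.re - t)
      nlinarith [abs_nonneg (z.re - t)]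
    have h2 : z.im^2 ≥ 1 := by
      have := _root_.sq_abs z.im
      nlinarith [abs_nonneg z.im]
    have h3 : ‖z - (t:ℂ)‖^2 < 1 + d^2 := by
      have h4 : Real.sqrt (1 + d^2)^2 = 1 + d^2 := Real.sq_sqrt (by positivity)
      nlinarith [norm_nonneg (z - (t:ℂ)), Real.sqrt_nonneg (1 + d^2)]
    nlinarith



lemma chain_bound (g : ℕ → ℂ) (c : ℝ) (N : ℕ) (hg : ∀ j ≤ N, g j ∈ ball (0:ℂ) 1)
    (hstep : ∀ j < N, hypDistDisk (g (j+1)) (g j) ≤ c) :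
    hypDistDisk (g N) (g 0) ≤ N * c := by
  induction N with
  | zero => simp [hypDistDisk_self]
  | succ m ih =>
    have h1 : hypDistDisk (g (m+1)) (g 0)
        ≤ hypDistDisk (g (m+1)) (g m) + hypDistDisk (g m) (g 0) :=
      hypDistDisk_triangle (hg (m+1) le_rfl) (hg 0 (Nat.zero_le _)) (hg m (Nat.le_succ m))
    have h2 := hstep m (Nat.lt_succ_self m)
    have h3 := ih (fun j hj => hg j (hj.trans (Nat.le_succ m)))
      (fun j hj => hstep j (hj.trans (Nat.lt_succ_self m)))
    push_cast
    push_cast at h3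
    linarith


lemma step_bound {x : ℕ → ℝ} {f : ℂ → ℂ}
    (hd : DifferentiableOn ℂ f (ball 0 1)) (hinj : InjOn f (ball 0 1))
    (him : f '' ball 0 1 = comb x) (hopen : IsOpen (comb x))
    (t w ρ : ℝ) (hρ : 0 < ρ)
    (hball : ∀ z : ℂ, ‖z - (t:ℂ)‖ < ρ → z ∈ comb x)
    (htw : t ≤ w) (hwρ : w - t < ρ) :
    hypDistDisk (Finv f ((w:ℝ):ℂ)) (Finv f ((t:ℝ):ℂ))
      ≤ Real.log ((1 + (w - t)/ρ) / (1 - (w - t)/ρ)) := by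
  set G : ℂ → ℂ := fun u => Finv f ((t:ℂ) + (ρ:ℂ) * u) with hG
  have hmem : ∀ u : ℂ, u ∈ ball (0:ℂ) 1 → ((t:ℂ) + (ρ:ℂ) * u) ∈ comb x := by
    intro u hu
    apply hball
    have e : (t:ℂ) + (ρ:ℂ) * u - (t:ℂ) = (ρ:ℂ) * u := by ring
    rw [e, norm_mul, Complex.norm_real, Real.norm_eq_abs, _root_.abs_of_pos hρ]
    have := abs_lt_one_of_mem hu
    nlinarith [norm_nonneg u]
  have hGd : DifferentiableOn ℂ G (ball 0 1) := by
    intro u hu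
    apply DifferentiableAt.differentiableWithinAt
    apply DifferentiableAt.comp
    · exact Finv_diffAt hd hinj him hopen (hmem u hu)
    · exact (differentiableAt_const _).add ((differentiableAt_const _).mul differentiableAt_id)
  have hGm : MapsTo G (ball 0 1) (ball 0 1) := fun u hu => Finv_mem him (hmem u hu)
  have hu₀nn : (0:ℝ) ≤ (w - t)/ρ := div_nonneg (by linarith) hρ.le
  have hu₀ : (((w - t)/ρ : ℝ) : ℂ) ∈ ball (0:ℂ) 1 := by
    rw [mem_ball_zero_iff, Complex.norm_real, Real.norm_eq_abs, _root_.abs_of_nonneg hu₀nn,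
      div_lt_one hρ]
    exact hwρ
  have h := schwarz_pick hGd hGm hu₀
  have e0 : G 0 = Finv f ((t:ℝ):ℂ) := by rw [hG]; norm_num
  have e1 : G (((w - t)/ρ : ℝ) : ℂ) = Finv f ((w:ℝ):ℂ) := by
    rw [hG]
    simp only []
    congr 1
    have hρne : (ρ:ℂ) ≠ 0 := Complex.ofReal_ne_zero.mpr hρ.ne'
    push_cast
    field_simp
    ring
  rw [e0, e1, Complex.norm_real, Real.norm_eq_abs, _root_.abs_of_nonneg hu₀nn] at h
  rw [hypDistDisk_eq]
  apply log_ratio_mono (pd_nonneg _ _) h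
  rw [div_lt_one hρ]
  exact hwρ

lemma chain_total {x : ℕ → ℝ} {f : ℂ → ℂ}
    (hd : DifferentiableOn ℂ f (ball 0 1)) (hinj : InjOn f (ball 0 1))
    (him : f '' ball 0 1 = comb x) (hopen : IsOpen (comb x))
    (hx0 : x 0 = 0) (hmono : StrictMono x)
    (hsep : ∃ l : ℝ, 1 < l ∧ ∀ n : ℕ, l ≤ x (n + 1) - x n)
    (n N : ℕ) (t : ℕ → ℝ) (h : ℝ) (hh0 : 0 < h) (hh : h ≤ 1/4)
    (ht1 : ∀ j ≤ N, x n ≤ t j) (ht2 : ∀ j ≤ N, t j ≤ x (n+1))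
    (hstep : ∀ j, j < N → ∃ d : ℝ, 0 ≤ d ∧ d ≤ t j - x n ∧ d ≤ x (n+1) - t j ∧
      t j ≤ t (j+1) ∧ t (j+1) - t j ≤ (Real.exp h - 1) * Real.sqrt (1 + d^2)) :
    hypDistDisk (Finv f ((t N : ℝ) : ℂ)) (Finv f ((t 0 : ℝ) : ℂ))
      ≤ N * (2 * h / (1 - 2 * h)) := by
  have hsqrt1 : Real.sqrt (1 + (0:ℝ)^2) = 1 := by norm_num
  apply chain_bound (fun j => Finv f ((t j : ℝ) : ℂ)) _ N
  · intro j hj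
    apply Finv_mem him
    apply ball_subset_comb hx0 hmono hsep n (t j) 0 (ht1 j hj) (ht2 j hj) le_rfl
      (by linarith [ht1 j hj]) (by linarith [ht2 j hj])
    rw [hsqrt1]
    simp
  · intro j hj
    obtain ⟨d, hd0, hdl, hdr, hmono', hΔ⟩ := hstep j hj
    have hρpos : (0:ℝ) < Real.sqrt (1 + d^2) := Real.sqrt_pos.mpr (by positivity)
    have hexp : Real.exp h - 1 ≤ h / (1 - h) := exp_sub_one_le hh0.le (by linarith)
    have hexp3 : h / (1 - h) ≤ 1/3 := by
      rw [div_le_div_iff₀ (by linarith) (by norm_num)]; linarith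
    have hexp0 : (0:ℝ) ≤ Real.exp h - 1 := by
      have := Real.one_le_exp hh0.le; linarith
    have hΔρ : t (j+1) - t j < Real.sqrt (1 + d^2) := by
      calc t (j+1) - t j ≤ (Real.exp h - 1) * Real.sqrt (1 + d^2) := hΔ
      _ ≤ (1/3) * Real.sqrt (1 + d^2) := by
          apply mul_le_mul_of_nonneg_right (by linarith) hρpos.le
      _ < Real.sqrt (1 + d^2) := by linarith
    have hb := step_bound hd hinj him hopen (t j) (t (j+1)) (Real.sqrt (1 + d^2)) hρpos
      (ball_subset_comb hx0 hmono hsep n (t j) d (ht1 j hj.le) (ht2 j hj.le) hd0 hdl hdr)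
      hmono' hΔρ
    refine le_trans hb ?_
    apply log_step (div_nonneg (by linarith) hρpos.le) ?_ hh0 hh
    calc (t (j+1) - t j) / Real.sqrt (1 + d^2) ≤ Real.exp h - 1 := by
          rw [div_le_iff₀ hρpos]; exact hΔ
    _ ≤ h / (1 - h) := hexp

lemma mem_comb_of_between {x : ℕ → ℝ} (hx0 : x 0 = 0) (hmono : StrictMono x)
    (hsep : ∃ l : ℝ, 1 < l ∧ ∀ n : ℕ, l ≤ x (n + 1) - x n)
    (n : ℕ) (t : ℝ) (ht1 : x n ≤ t) (ht2 : t ≤ x (n+1)) : ((t:ℝ):ℂ) ∈ comb x := by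
  apply ball_subset_comb hx0 hmono hsep n t 0 ht1 ht2 le_rfl (by linarith) (by linarith)
  have hsqrt1 : Real.sqrt (1 + (0:ℝ)^2) = 1 := by norm_num
  rw [hsqrt1]
  simp

end CombAux

set_option maxHeartbeats 1000000 in
open CombAux Metric Complex Set Filter Topology in
/-- **Estimate (3.7).** For every `n ≥ 1` and every `r` with `xₙ₋₁ < r ≤ xₙ`,
the hyperbolic distance in `C` between `xₙ₋₁` and `r` (computed via any Riemann
map `f` of the unit disk onto `C`) satisfies `d_C(xₙ₋₁, r) ≤ 4 arcsinh r`. -/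
theorem comb_hypDist_xn_r_le (x : ℕ → ℝ) (hx0 : x 0 = 0)
    (hmono : StrictMono x) (hxlim : Tendsto x atTop atTop)
    (hsep : ∃ l : ℝ, 1 < l ∧ ∀ n : ℕ, l ≤ x (n + 1) - x n)
    (n : ℕ) (r : ℝ) (hr1 : x n < r) (hr2 : r ≤ x (n + 1))
    (f : ℂ → ℂ) (hf : IsRiemannMap f (comb x))
    (a b : ℂ) (ha : a ∈ Metric.ball (0 : ℂ) 1) (hb : b ∈ Metric.ball (0 : ℂ) 1)
    (hfa : f a = (x n : ℂ)) (hfb : f b = (r : ℂ)) :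
    hypDistDisk a b ≤ 4 * Real.arsinh r := by
  obtain ⟨hd, hinj, him⟩ := hf
  have hopen : IsOpen (comb x) := comb_isOpen x hxlim
  have hxn0 : 0 ≤ x n := by rw [← hx0]; exact hmono.le_iff_le.mpr (Nat.zero_le n)
  have hr0 : 0 < r := lt_of_le_of_lt hxn0 hr1
  have hα0 : 0 < x (n+1) - x n := by have := hmono (Nat.lt_succ_self n); linarith
  have hab : a = Finv f ((x n : ℝ) : ℂ) := by
    rw [← hfa]; exact (Finv_left hinj ha).symm
  have hbb : b = Finv f ((r : ℝ) : ℂ) := by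
    rw [← hfb]; exact (Finv_left hinj hb).symm
  have hR0 : 0 < Real.arsinh r := Real.arsinh_pos_iff.mpr hr0
  rcases le_or_gt r (x n + (x (n+1) - x n)/2) with hcase | hcase
  · -- Case 1 : ascent only
    set A := Real.arsinh (r - x n) with hA
    have hA0 : 0 < A := Real.arsinh_pos_iff.mpr (by linarith)
    set N := Nat.ceil (4*A) with hN
    have hN0 : 0 < N := Nat.ceil_pos.mpr (by positivity)
    have hNr : (0:ℝ) < (N:ℝ) := by exact_mod_cast hN0
    have hNA : 4*A ≤ (N:ℝ) := Nat.le_ceil _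
    set h₁ := A / (N:ℝ) with hh₁def
    have hh₁0 : 0 < h₁ := div_pos hA0 hNr
    have hh₁ : h₁ ≤ 1/4 := by rw [hh₁def, div_le_iff₀ hNr]; linarith
    have hNh₁ : (N:ℝ) * h₁ = A := by rw [hh₁def]; field_simp
    set t : ℕ → ℝ := fun j => x n + Real.sinh ((j:ℝ) * h₁) with ht
    have hsinh_le : ∀ j ≤ N, Real.sinh ((j:ℝ)*h₁) ≤ r - x n := by
      intro j hj
      have h1 : (j:ℝ)*h₁ ≤ (N:ℝ)*h₁ := by
        apply mul_le_mul_of_nonneg_right _ hh₁0.le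
        exact_mod_cast hj
      rw [hNh₁] at h1
      calc Real.sinh ((j:ℝ)*h₁) ≤ Real.sinh A := Real.sinh_le_sinh.mpr h1
      _ = r - x n := by rw [hA, Real.sinh_arsinh]
    have hsinh_nonneg : ∀ j : ℕ, 0 ≤ Real.sinh ((j:ℝ)*h₁) := fun j =>
      Real.sinh_nonneg_iff.mpr (by positivity)
    have ht1 : ∀ j ≤ N, x n ≤ t j := by
      intro j hj; simp only [ht]; linarith [hsinh_nonneg j]
    have ht2 : ∀ j ≤ N, t j ≤ x (n+1) := by
      intro j hj; simp only [ht]; linarith [hsinh_le j hj]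
    have hstep : ∀ j, j < N → ∃ d : ℝ, 0 ≤ d ∧ d ≤ t j - x n ∧ d ≤ x (n+1) - t j ∧
        t j ≤ t (j+1) ∧ t (j+1) - t j ≤ (Real.exp h₁ - 1) * Real.sqrt (1 + d^2) := by
      intro j hj
      refine ⟨Real.sinh ((j:ℝ)*h₁), hsinh_nonneg j, ?_, ?_, ?_, ?_⟩
      · simp only [ht]; linarith
      · have := hsinh_le j hj.le
        simp only [ht]
        linarith
      · simp only [ht]
        have h1 : (j:ℝ)*h₁ ≤ ((j+1:ℕ):ℝ)*h₁ := by
          apply mul_le_mul_of_nonneg_right _ hh₁0.le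
          push_cast; linarith
        linarith [Real.sinh_le_sinh.mpr h1]
      · simp only [ht]
        have e : ((j+1:ℕ):ℝ)*h₁ = (j:ℝ)*h₁ + h₁ := by push_cast; ring
        rw [e, sqrt_one_add_sinh_sq]
        have h2 := sinh_step ((j:ℝ)*h₁) h₁ (by positivity) hh₁0.le
        linarith
    have htot := chain_total hd hinj him hopen hx0 hmono hsep n N t h₁ hh₁0 hh₁ ht1 ht2 hstep
    have e0 : t 0 = x n := by simp [ht]
    have eN : t N = r := by
      simp only [ht]
      rw [hNh₁, hA, Real.sinh_arsinh]
      ring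
    rw [e0, eN] at htot
    rw [hab, hbb, hypDistDisk_comm]
    refine le_trans htot ?_
    have h2 : 2*h₁/(1-2*h₁) ≤ 4*h₁ := by
      rw [div_le_iff₀ (by linarith)]
      nlinarith
    have h3 : (N:ℝ) * (2*h₁/(1-2*h₁)) ≤ (N:ℝ) * (4*h₁) :=
      mul_le_mul_of_nonneg_left h2 (by positivity)
    have h4 : (N:ℝ)*(4*h₁) = 4*A := by rw [← hNh₁]; ring
    have h5 : A ≤ Real.arsinh r := Real.arsinh_le_arsinh.mpr (by linarith)
    linarith
  · -- Case 2 : ascent to the midpoint, then descent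
    set B := Real.arsinh ((x (n+1) - x n)/2) with hB
    have hB0 : 0 < B := Real.arsinh_pos_iff.mpr (by linarith)
    have hBR : B < Real.arsinh r := Real.arsinh_lt_arsinh.mpr (by linarith)
    set E := Real.arsinh (x (n+1) - r) with hE
    have hE0 : 0 ≤ E := Real.arsinh_nonneg_iff.mpr (by linarith)
    have hEB : E < B := Real.arsinh_lt_arsinh.mpr (by linarith)
    set D := B - E with hD
    have hD0 : 0 < D := by rw [hD]; linarith
    set h₀ := min (1/4 : ℝ) ((Real.arsinh r - B)/(2*Real.arsinh r)) with hh₀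
    have hRB0 : 0 < Real.arsinh r - B := by linarith
    have hh₀0 : 0 < h₀ := lt_min (by norm_num) (by positivity)
    have hh₀4 : h₀ ≤ 1/4 := min_le_left _ _
    have hh₀R : h₀ * (2*Real.arsinh r) ≤ Real.arsinh r - B := by
      have := min_le_right (1/4 : ℝ) ((Real.arsinh r - B)/(2*Real.arsinh r))
      rw [← le_div_iff₀ (by positivity)]
      exact this
    -- ascent chain
    set N := Nat.ceil (B/h₀) with hN
    have hN0 : 0 < N := Nat.ceil_pos.mpr (by positivity)
    have hNr : (0:ℝ) < (N:ℝ) := by exact_mod_cast hN0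
    have hNB : B/h₀ ≤ (N:ℝ) := Nat.le_ceil _
    set h₁ := B / (N:ℝ) with hh₁def
    have hh₁0 : 0 < h₁ := div_pos hB0 hNr
    have hh₁h₀ : h₁ ≤ h₀ := by
      rw [hh₁def, div_le_iff₀ hNr]
      have := (div_le_iff₀ hh₀0).mp hNB
      nlinarith
    have hh₁ : h₁ ≤ 1/4 := le_trans hh₁h₀ hh₀4
    have hNh₁ : (N:ℝ) * h₁ = B := by rw [hh₁def]; field_simp
    set t : ℕ → ℝ := fun j => x n + Real.sinh ((j:ℝ) * h₁) with ht
    have hsinh_le : ∀ j ≤ N, Real.sinh ((j:ℝ)*h₁) ≤ (x (n+1) - x n)/2 := by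
      intro j hj
      have h1 : (j:ℝ)*h₁ ≤ (N:ℝ)*h₁ := by
        apply mul_le_mul_of_nonneg_right _ hh₁0.le
        exact_mod_cast hj
      rw [hNh₁] at h1
      calc Real.sinh ((j:ℝ)*h₁) ≤ Real.sinh B := Real.sinh_le_sinh.mpr h1
      _ = (x (n+1) - x n)/2 := by rw [hB, Real.sinh_arsinh]
    have hsinh_nonneg : ∀ j : ℕ, 0 ≤ Real.sinh ((j:ℝ)*h₁) := fun j =>
      Real.sinh_nonneg_iff.mpr (by positivity)
    have ht1 : ∀ j ≤ N, x n ≤ t j := by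
      intro j hj; simp only [ht]; linarith [hsinh_nonneg j]
    have ht2 : ∀ j ≤ N, t j ≤ x (n+1) := by
      intro j hj; simp only [ht]; linarith [hsinh_le j hj]
    have hstep : ∀ j, j < N → ∃ d : ℝ, 0 ≤ d ∧ d ≤ t j - x n ∧ d ≤ x (n+1) - t j ∧
        t j ≤ t (j+1) ∧ t (j+1) - t j ≤ (Real.exp h₁ - 1) * Real.sqrt (1 + d^2) := by
      intro j hj
      refine ⟨Real.sinh ((j:ℝ)*h₁), hsinh_nonneg j, ?_, ?_, ?_, ?_⟩
      · simp only [ht]; linarith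
      · have := hsinh_le j hj.le
        simp only [ht]
        linarith
      · simp only [ht]
        have h1 : (j:ℝ)*h₁ ≤ ((j+1:ℕ):ℝ)*h₁ := by
          apply mul_le_mul_of_nonneg_right _ hh₁0.le
          push_cast; linarith
        linarith [Real.sinh_le_sinh.mpr h1]
      · simp only [ht]
        have e : ((j+1:ℕ):ℝ)*h₁ = (j:ℝ)*h₁ + h₁ := by push_cast; ring
        rw [e, sqrt_one_add_sinh_sq]
        have h2 := sinh_step ((j:ℝ)*h₁) h₁ (by positivity) hh₁0.le
        linarith
    have htot1 := chain_total hd hinj him hopen hx0 hmono hsep n N t h₁ hh₁0 hh₁ ht1 ht2 hstep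
    have e0 : t 0 = x n := by simp [ht]
    have eN : t N = x n + (x (n+1) - x n)/2 := by
      simp only [ht]
      rw [hNh₁, hB, Real.sinh_arsinh]
    -- descent chain
    set K := Nat.ceil (D/h₀) with hK
    have hK0 : 0 < K := Nat.ceil_pos.mpr (by positivity)
    have hKr : (0:ℝ) < (K:ℝ) := by exact_mod_cast hK0
    have hKD : D/h₀ ≤ (K:ℝ) := Nat.le_ceil _
    set h₂ := D / (K:ℝ) with hh₂def
    have hh₂0 : 0 < h₂ := div_pos hD0 hKr
    have hh₂h₀ : h₂ ≤ h₀ := by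
      rw [hh₂def, div_le_iff₀ hKr]
      have := (div_le_iff₀ hh₀0).mp hKD
      nlinarith
    have hh₂ : h₂ ≤ 1/4 := le_trans hh₂h₀ hh₀4
    have hKh₂ : (K:ℝ) * h₂ = D := by rw [hh₂def]; field_simp
    set τ : ℕ → ℝ := fun j => x (n+1) - Real.sinh (B - (j:ℝ) * h₂) with hτ
    have harg : ∀ j ≤ K, 0 ≤ B - (j:ℝ)*h₂ ∧ B - (j:ℝ)*h₂ ≤ B := by
      intro j hj
      constructor
      · have h1 : (j:ℝ)*h₂ ≤ (K:ℝ)*h₂ := by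
          apply mul_le_mul_of_nonneg_right _ hh₂0.le
          exact_mod_cast hj
        rw [hKh₂] at h1
        rw [hD] at h1
        linarith
      · nlinarith [mul_nonneg (Nat.cast_nonneg j : (0:ℝ) ≤ (j:ℝ)) hh₂0.le]
    have hs_le : ∀ j ≤ K, Real.sinh (B - (j:ℝ)*h₂) ≤ (x (n+1) - x n)/2 := by
      intro j hj
      calc Real.sinh (B - (j:ℝ)*h₂) ≤ Real.sinh B := Real.sinh_le_sinh.mpr (harg j hj).2
      _ = (x (n+1) - x n)/2 := by rw [hB, Real.sinh_arsinh]
    have hs_ge : ∀ j ≤ K, 0 ≤ Real.sinh (B - (j:ℝ)*h₂) := by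
      intro j hj
      exact Real.sinh_nonneg_iff.mpr (harg j hj).1
    have hτ1 : ∀ j ≤ K, x n ≤ τ j := by
      intro j hj; simp only [hτ]; linarith [hs_le j hj]
    have hτ2 : ∀ j ≤ K, τ j ≤ x (n+1) := by
      intro j hj; simp only [hτ]; linarith [hs_ge j hj]
    have hstep' : ∀ j, j < K → ∃ d : ℝ, 0 ≤ d ∧ d ≤ τ j - x n ∧ d ≤ x (n+1) - τ j ∧
        τ j ≤ τ (j+1) ∧ τ (j+1) - τ j ≤ (Real.exp h₂ - 1) * Real.sqrt (1 + d^2) := by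
      intro j hj
      refine ⟨Real.sinh (B - (j:ℝ)*h₂), hs_ge j hj.le, ?_, ?_, ?_, ?_⟩
      · have := hs_le j hj.le
        simp only [hτ]
        linarith
      · simp only [hτ]; linarith
      · simp only [hτ]
        have h1 : B - ((j+1:ℕ):ℝ)*h₂ ≤ B - (j:ℝ)*h₂ := by
          push_cast
          nlinarith
        linarith [Real.sinh_le_sinh.mpr h1]
      · simp only [hτ]
        have e : B - ((j+1:ℕ):ℝ)*h₂ = (B - (j:ℝ)*h₂) - h₂ := by push_cast; ring
        rw [e]
        set v := B - (j:ℝ)*h₂ - h₂ with hv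
        have hv0 : 0 ≤ v := by
          have := (harg (j+1) hj).1
          rw [hv]
          push_cast at this ⊢
          linarith
        have e2 : B - (j:ℝ)*h₂ = v + h₂ := by rw [hv]; ring
        rw [e2, sqrt_one_add_sinh_sq]
        have h2 := sinh_step v h₂ hv0 hh₂0.le
        have h3 : Real.cosh v ≤ Real.cosh (v + h₂) := by
          rw [Real.cosh_le_cosh, _root_.abs_of_nonneg hv0, _root_.abs_of_nonneg (by linarith)]
          linarith
        have hexp0 : (0:ℝ) ≤ Real.exp h₂ - 1 := by
          have := Real.one_le_exp hh₂0.le; linarith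
        nlinarith
    have htot2 := chain_total hd hinj him hopen hx0 hmono hsep n K τ h₂ hh₂0 hh₂ hτ1 hτ2 hstep'
    have eτ0 : τ 0 = x n + (x (n+1) - x n)/2 := by
      simp only [hτ]
      push_cast
      rw [show B - (0:ℝ)*h₂ = B by ring, hB, Real.sinh_arsinh]
      ring
    have eτK : τ K = r := by
      simp only [hτ]
      rw [hKh₂, show B - D = E by rw [hD]; ring, hE, Real.sinh_arsinh]
      ring
    rw [e0, eN] at htot1
    rw [eτ0, eτK] at htot2
    -- triangle inequality at the midpoint
    have hmid1 : x n ≤ x n + (x (n+1) - x n)/2 := by linarith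
    have hmid2 : x n + (x (n+1) - x n)/2 ≤ x (n+1) := by linarith
    have hmemxn := mem_comb_of_between hx0 hmono hsep n (x n) le_rfl (by linarith)
    have hmemmid := mem_comb_of_between hx0 hmono hsep n _ hmid1 hmid2
    have hmemr := mem_comb_of_between hx0 hmono hsep n r hr1.le hr2
    have htri := hypDistDisk_triangle (Finv_mem him hmemr) (Finv_mem him hmemxn)
      (Finv_mem him hmemmid)
    rw [hab, hbb, hypDistDisk_comm]
    -- numerical combination
    have hden : (0:ℝ) < 1 - 2*h₀ := by linarith
    have bound1 : (N:ℝ) * (2*h₁/(1-2*h₁)) ≤ 2*B/(1-2*h₀) := by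
      have k1 : 2*h₁/(1-2*h₁) ≤ 2*h₁/(1-2*h₀) := by
        apply div_le_div_of_nonneg_left (by linarith) hden
        linarith
      calc (N:ℝ) * (2*h₁/(1-2*h₁)) ≤ (N:ℝ) * (2*h₁/(1-2*h₀)) :=
            mul_le_mul_of_nonneg_left k1 (by positivity)
      _ = 2*((N:ℝ)*h₁)/(1-2*h₀) := by ring
      _ = 2*B/(1-2*h₀) := by rw [hNh₁]
    have bound2 : (K:ℝ) * (2*h₂/(1-2*h₂)) ≤ 2*B/(1-2*h₀) := by
      have k1 : 2*h₂/(1-2*h₂) ≤ 2*h₂/(1-2*h₀) := by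
        apply div_le_div_of_nonneg_left (by linarith) hden
        linarith
      calc (K:ℝ) * (2*h₂/(1-2*h₂)) ≤ (K:ℝ) * (2*h₂/(1-2*h₀)) :=
            mul_le_mul_of_nonneg_left k1 (by positivity)
      _ = 2*((K:ℝ)*h₂)/(1-2*h₀) := by ring
      _ = 2*D/(1-2*h₀) := by rw [hKh₂]
      _ ≤ 2*B/(1-2*h₀) := by
          gcongr
          rw [hD]; linarith
    have final : 4*B/(1-2*h₀) ≤ 4*Real.arsinh r := by
      rw [div_le_iff₀ hden]
      nlinarith
    calc hypDistDisk (Finv f ((r:ℝ):ℂ)) (Finv f ((x n:ℝ):ℂ))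
        ≤ hypDistDisk (Finv f ((r:ℝ):ℂ)) (Finv f ((x n + (x (n+1) - x n)/2 : ℝ):ℂ))
          + hypDistDisk (Finv f ((x n + (x (n+1) - x n)/2 : ℝ):ℂ)) (Finv f ((x n:ℝ):ℂ)) := htri
      _ ≤ (K:ℝ) * (2*h₂/(1-2*h₂)) + (N:ℝ) * (2*h₁/(1-2*h₁)) := add_le_add htot2 htot1
      _ ≤ 2*B/(1-2*h₀) + 2*B/(1-2*h₀) := add_le_add bound2 bound1
      _ = 4*B/(1-2*h₀) := by ring
      _ ≤ 4*Real.arsinh r := final
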